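/- arXiv:2107.08480 — 2 statements merged into one kernel-verified Lean document; each statement's English description precedes it below -/
import Mathlib

section
/- Let π be a permutation of {1,...,n} and let M be an induced matching in G(π), viewed as a set of matches (pairs (x,y) with x < y and π⁻¹(x) > π⁻¹(y)). Then the matches in M are pairwise comparable under the relation e < e' (defined as y < x' and π⁻¹(x) < π⁻¹(y')); that is, M can be ordered as a chain. -/
def permGraph {n : ℕ} (π : Equiv.Perm (Fin n)) : SimpleGraph (Fin n) where
  Adj u v := (u < v ∧ π.symm v < π.symm u) ∨ (v < u ∧ π.symm u < π.symm v)
  symm := ⟨by intro u v h; tauto⟩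
  loopless := ⟨by intro u h; rcases h with ⟨h, _⟩ | ⟨h, _⟩ <;> exact lt_irrefl u h⟩

def IsMatch {n : ℕ} (π : Equiv.Perm (Fin n)) (x y : Fin n) : Prop :=
  x < y ∧ π.symm y < π.symm x

def MatchLT {n : ℕ} (π : Equiv.Perm (Fin n)) (e e' : Fin n × Fin n) : Prop :=
  e.2 < e'.1 ∧ π.symm e.1 < π.symm e'.2

def IsInducedMatching {V : Type*} (G : SimpleGraph V) (M : Set (Sym2 V)) : Prop :=
  M ⊆ G.edgeSet ∧
    ∀ e ∈ M, ∀ f ∈ M, e ≠ f → ∀ u ∈ e, ∀ v ∈ f, u ≠ v ∧ ¬ G.Adj u v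


/-- If `M` is an induced matching of `G(π)`, viewed as a set of matches, then the matches
in `M` are pairwise comparable under `MatchLT`, i.e. `M` can be ordered as a chain. -/
theorem stmt_5 {n : ℕ} (π : Equiv.Perm (Fin n)) (M : Set (Fin n × Fin n))
    (hM : ∀ p ∈ M, IsMatch π p.1 p.2)
    (hind : IsInducedMatching (permGraph π) {s | ∃ p ∈ M, s = s(p.1, p.2)}) :
    ∀ p ∈ M, ∀ q ∈ M, p ≠ q → MatchLT π p q ∨ MatchLT π q p := by
  intro p hp q hq hpq
  obtain ⟨hxy, hixy⟩ := hM p hp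
  obtain ⟨hxy', hixy'⟩ := hM q hq
  obtain ⟨x, y⟩ := p
  obtain ⟨x', y'⟩ := q
  simp only [MatchLT] at *
  have hef : s(x, y) ≠ s(x', y') := by
    intro h
    rw [Sym2.eq_iff] at h
    rcases h with ⟨h1, h2⟩ | ⟨h1, h2⟩
    · exact hpq (by simp [Prod.ext_iff, h1, h2])
    · subst h1; subst h2; exact absurd hxy (not_lt.2 hxy'.le)
  have H := hind.2 s(x, y) ⟨(x, y), hp, rfl⟩ s(x', y') ⟨(x', y'), hq, rfl⟩ hef
  have agree : ∀ u v : Fin n, (u = x ∨ u = y) → (v = x' ∨ v = y') →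
      u ≠ v ∧ (u < v ↔ π.symm u < π.symm v) ∧ (v < u ↔ π.symm v < π.symm u) := by
    intro u v hu hv
    obtain ⟨hne, hnadj⟩ := H u (by rcases hu with h | h <;> simp [h]) v
      (by rcases hv with h | h <;> simp [h])
    simp only [permGraph, not_or, not_and] at hnadj
    obtain ⟨h1, h2⟩ := hnadj
    have hne' : π.symm u ≠ π.symm v := fun h => hne (π.symm.injective h)
    refine ⟨hne, ?_, ?_⟩
    · constructor
      · intro h; exact (lt_of_le_of_ne (not_lt.1 (h1 h)) hne')
      · intro h
        rcases lt_trichotomy u v with h' | h' | h'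
        · exact h'
        · exact absurd h' hne
        · exact absurd h (not_lt.2 (le_of_lt (lt_of_le_of_ne (not_lt.1 (h2 h')) hne'.symm)))
    · constructor
      · intro h; exact (lt_of_le_of_ne (not_lt.1 (h2 h)) hne'.symm)
      · intro h
        rcases lt_trichotomy v u with h' | h' | h'
        · exact h'
        · exact absurd h'.symm hne
        · exact absurd h (not_lt.2 (le_of_lt (lt_of_le_of_ne (not_lt.1 (h1 h')) hne')))
  obtain ⟨hnxx, hxx, hxx'⟩ := agree x x' (Or.inl rfl) (Or.inl rfl)
  rcases lt_trichotomy x x' with h | h | h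
  · -- x < x' : show MatchLT p q
    left
    have hpx : π.symm x < π.symm x' := hxx.1 h
    obtain ⟨hnyx, hyx, hyx'⟩ := agree y x' (Or.inr rfl) (Or.inl rfl)
    have hy : y < x' := by
      rcases lt_trichotomy y x' with h' | h' | h'
      · exact h'
      · exact absurd h' hnyx
      · exact absurd (hixy.trans hpx) (not_lt.2 (le_of_lt (hyx'.1 h')))
    refine ⟨hy, ?_⟩
    obtain ⟨_, hxy'2, _⟩ := agree x y' (Or.inl rfl) (Or.inr rfl)
    exact hxy'2.1 (hxy.trans (hy.trans hxy'))
  · exact absurd h hnxx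
  · -- x' < x : show MatchLT q p
    right
    have hpx : π.symm x' < π.symm x := hxx'.1 h
    obtain ⟨hnxy, hxy2, hxy2'⟩ := agree x y' (Or.inl rfl) (Or.inr rfl)
    have hy : y' < x := by
      rcases lt_trichotomy y' x with h' | h' | h'
      · exact h'
      · exact absurd h'.symm hnxy
      · exact absurd (hixy'.trans hpx) (not_lt.2 (le_of_lt (hxy2.1 h')))
    refine ⟨hy, ?_⟩
    obtain ⟨_, _, hyx2⟩ := agree y x' (Or.inr rfl) (Or.inl rfl)
    exact hyx2.1 (hxy'.trans (hy.trans hxy))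
end

section
/- Let π be a permutation of {1,...,n} and define, for each match e, f(e) as the maximum length of a chain of matches whose smallest element is e. Then the maximum of f over all matches equals the maximum size of an induced matching in G(π), and f satisfies the recurrence f(e) = 1 + max{f(e') : e < e'} (with max ∅ = 0). -/
/-- The set of lengths of chains of matches whose smallest element is `e`. -/
def chainLengthsFrom {n : ℕ} (π : Equiv.Perm (Fin n)) (e : Fin n × Fin n) : Set ℕ :=
  {k | 1 ≤ k ∧ ∃ c : ℕ → Fin n × Fin n, c 0 = e ∧
    (∀ i < k, IsMatch π (c i).1 (c i).2) ∧
    (∀ i, i + 1 < k → MatchLT π (c i) (c (i + 1)))}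

-- transitivity step
lemma matchLT_trans' {n : ℕ} {π : Equiv.Perm (Fin n)} {a b c : Fin n × Fin n}
    (h1 : MatchLT π a b) (hb : IsMatch π b.1 b.2) (h2 : MatchLT π b c) :
    MatchLT π a c :=
  ⟨lt_trans (lt_trans h1.1 hb.1) h2.1, lt_trans (lt_trans h1.2 hb.2) h2.2⟩

lemma chainLT {n : ℕ} {π : Equiv.Perm (Fin n)} {c : ℕ → Fin n × Fin n} {k : ℕ}
    (hc1 : ∀ i < k, IsMatch π (c i).1 (c i).2)
    (hc2 : ∀ i, i + 1 < k → MatchLT π (c i) (c (i + 1))) :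
    ∀ j, j < k → ∀ i < j, MatchLT π (c i) (c j) := by
  intro j
  induction j with
  | zero => intro _ i hi; omega
  | succ j ih =>
    intro hj i hi
    rcases Nat.lt_succ_iff_lt_or_eq.mp hi with h | h
    · exact matchLT_trans' (ih (by omega) i h) (hc1 j (by omega)) (hc2 j hj)
    · subst h; exact hc2 i hj

lemma chain_le {n : ℕ} {π : Equiv.Perm (Fin n)} {e : Fin n × Fin n} {k : ℕ}
    (hk : k ∈ chainLengthsFrom π e) : k ≤ n := by
  obtain ⟨-, c, -, hc1, hc2⟩ := hk
  have key : Function.Injective (fun i : Fin k => (c i).1) := by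
    intro i j hij
    by_contra hne
    have hne' : (i : ℕ) ≠ (j : ℕ) := fun h => hne (Fin.ext h)
    simp only at hij
    rcases Nat.lt_or_ge (i : ℕ) (j : ℕ) with h | h
    · have h1 := (chainLT hc1 hc2 j j.isLt i h).1
      have h2 := (hc1 i (by omega)).1
      exact (ne_of_lt (lt_trans h2 h1)) hij
    · have hlt : (j : ℕ) < (i : ℕ) := by omega
      have h1 := (chainLT hc1 hc2 i i.isLt j hlt).1
      have h2 := (hc1 j (by omega)).1
      exact (ne_of_lt (lt_trans h2 h1)) hij.symm
  calc k = Fintype.card (Fin k) := (Fintype.card_fin k).symm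
  _ ≤ Fintype.card (Fin n) := Fintype.card_le_of_injective _ key
  _ = n := Fintype.card_fin n

-- separation from MatchLT
lemma notAdj {n : ℕ} {π : Equiv.Perm (Fin n)} {u v : Fin n}
    (h1 : u < v) (h2 : π.symm u < π.symm v) :
    u ≠ v ∧ ¬ (permGraph π).Adj u v := by
  refine ⟨ne_of_lt h1, ?_⟩
  rintro (⟨h, h'⟩ | ⟨h, h'⟩)
  · exact absurd h2 (not_lt.mpr h'.le)
  · exact absurd h1 (not_lt.mpr h.le)

lemma sep {n : ℕ} {π : Equiv.Perm (Fin n)} {e e' : Fin n × Fin n}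
    (he : IsMatch π e.1 e.2) (he' : IsMatch π e'.1 e'.2) (h : MatchLT π e e') :
    ∀ u, (u = e.1 ∨ u = e.2) → ∀ v, (v = e'.1 ∨ v = e'.2) →
      u ≠ v ∧ ¬ (permGraph π).Adj u v := by
  obtain ⟨a1, a2⟩ := he
  obtain ⟨b1, b2⟩ := he'
  obtain ⟨c1, c2⟩ := h
  rintro u (rfl | rfl) v (rfl | rfl)
  · exact notAdj (lt_trans a1 c1) (lt_trans c2 b2)
  · exact notAdj (lt_trans a1 (lt_trans c1 b1)) c2
  · exact notAdj c1 (lt_trans a2 (lt_trans c2 b2))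
  · exact notAdj (lt_trans c1 b1) (lt_trans a2 c2)

lemma chain_matching {n : ℕ} {π : Equiv.Perm (Fin n)} {e : Fin n × Fin n} {k : ℕ}
    (hk : k ∈ chainLengthsFrom π e) :
    ∃ M : Finset (Sym2 (Fin n)), IsInducedMatching (permGraph π) ↑M ∧ M.card = k := by
  classical
  obtain ⟨h1, c, hc0, hc1, hc2⟩ := hk
  refine ⟨(Finset.range k).image (fun i => s((c i).1, (c i).2)), ⟨?_, ?_⟩, ?_⟩
  · intro z hz
    simp only [Finset.coe_image, Set.mem_image, Finset.mem_coe, Finset.mem_range] at hz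
    obtain ⟨i, hi, rfl⟩ := hz
    exact Or.inl (hc1 i hi)
  · intro z hz w hw hzw u hu v hv
    simp only [Finset.mem_coe, Finset.mem_image, Finset.mem_range] at hz hw
    obtain ⟨i, hi, rfl⟩ := hz
    obtain ⟨j, hj, rfl⟩ := hw
    have hij : i ≠ j := by rintro rfl; exact hzw rfl
    rcases hij.lt_or_gt with h | h
    · exact sep (hc1 i hi) (hc1 j hj) (chainLT hc1 hc2 j hj i h) u
        (Sym2.mem_iff.mp hu) v (Sym2.mem_iff.mp hv)
    · have := sep (hc1 j hj) (hc1 i hi) (chainLT hc1 hc2 i hi j h) v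
        (Sym2.mem_iff.mp hv) u (Sym2.mem_iff.mp hu)
      exact ⟨this.1.symm, fun hadj => this.2 hadj.symm⟩
  · rw [Finset.card_image_of_injOn, Finset.card_range]
    intro i hi j hj heq
    simp only [Finset.coe_range, Set.mem_Iio] at hi hj
    by_contra hne
    rcases (Ne.lt_or_gt hne) with h | h
    · have L := chainLT hc1 hc2 j hj i h
      have mi := hc1 i hi
      rcases Sym2.eq_iff.mp heq with ⟨ha, _⟩ | ⟨ha, _⟩
      · exact (ne_of_lt (lt_trans mi.1 L.1)) ha
      · exact (ne_of_lt (lt_trans (lt_trans mi.1 L.1) (hc1 j hj).1)) ha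
    · have L := chainLT hc1 hc2 i hi j h
      have mj := hc1 j hj
      rcases Sym2.eq_iff.mp heq with ⟨ha, _⟩ | ⟨ha, _⟩
      · exact (ne_of_lt (lt_trans mj.1 L.1)) ha.symm
      · exact (ne_of_lt L.1) ha.symm

lemma comp_lemma {n : ℕ} {π : Equiv.Perm (Fin n)} {M : Finset (Sym2 (Fin n))}
    (hM : IsInducedMatching (permGraph π) ↑M) {p q : Fin n × Fin n}
    (hpm : s(p.1, p.2) ∈ M) (hp : p.1 < p.2)
    (hqm : s(q.1, q.2) ∈ M) (hq : q.1 < q.2) (h : p.1 < q.1) :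
    MatchLT π p q := by
  have hpadj : (permGraph π).Adj p.1 p.2 := hM.1 hpm
  have hqadj : (permGraph π).Adj q.1 q.2 := hM.1 hqm
  have a2 : π.symm p.2 < π.symm p.1 := by
    rcases hpadj with ⟨_, h'⟩ | ⟨h'', _⟩
    · exact h'
    · exact absurd hp (not_lt.mpr h''.le)
  have b2 : π.symm q.2 < π.symm q.1 := by
    rcases hqadj with ⟨_, h'⟩ | ⟨h'', _⟩
    · exact h'
    · exact absurd hq (not_lt.mpr h''.le)
  have hne : s(p.1, p.2) ≠ s(q.1, q.2) := by
    intro heq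
    rcases Sym2.eq_iff.mp heq with ⟨ha, _⟩ | ⟨ha, hb⟩
    · exact (ne_of_lt h) ha
    · have h1 : p.1 < q.2 := lt_trans h hq
      rw [ha] at h1
      exact lt_irrefl _ h1
  have nonadj := hM.2 _ hpm _ hqm hne
  have key1 : p.2 < q.1 := by
    have n1 := nonadj p.2 (Sym2.mem_mk_right _ _) q.1 (Sym2.mem_mk_left _ _)
    rcases n1.1.lt_or_gt with hlt | hlt
    · exact hlt
    · exfalso
      have hA : ¬ (π.symm p.2 < π.symm q.1) := fun hh => n1.2 (Or.inr ⟨hlt, hh⟩)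
      have n2 := nonadj p.1 (Sym2.mem_mk_left _ _) q.1 (Sym2.mem_mk_left _ _)
      have hB : ¬ (π.symm q.1 < π.symm p.1) := fun hh => n2.2 (Or.inl ⟨h, hh⟩)
      have hne2 : π.symm q.1 ≠ π.symm p.2 := π.symm.injective.ne n1.1.symm
      have : π.symm q.1 < π.symm p.2 := lt_of_le_of_ne (not_lt.mp hA) hne2
      exact hB (lt_trans this a2)
  have key2 : π.symm p.1 < π.symm q.2 := by
    have n1 := nonadj p.1 (Sym2.mem_mk_left _ _) q.2 (Sym2.mem_mk_right _ _)
    have hlt : p.1 < q.2 := lt_trans h hq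
    have hA : ¬ (π.symm q.2 < π.symm p.1) := fun hh => n1.2 (Or.inl ⟨hlt, hh⟩)
    exact lt_of_le_of_ne (not_lt.mp hA) (π.symm.injective.ne n1.1)
  exact ⟨key1, key2⟩

lemma matching_chain {n : ℕ} {π : Equiv.Perm (Fin n)} {M : Finset (Sym2 (Fin n))}
    (hM : IsInducedMatching (permGraph π) ↑M) (hpos : 0 < M.card) :
    ∃ e : Fin n × Fin n, IsMatch π e.1 e.2 ∧ M.card ∈ chainLengthsFrom π e := by
  classical
  set k := M.card with hkdef
  set E : Finset (Fin n × Fin n) :=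
    Finset.univ.filter (fun p : Fin n × Fin n => p.1 < p.2 ∧ s(p.1, p.2) ∈ M) with hEdef
  have hE : ∀ p ∈ E, p.1 < p.2 ∧ s(p.1, p.2) ∈ M := by
    intro p hp
    simpa [hEdef, Finset.mem_filter] using hp
  have cardE : E.card = k := by
    apply Finset.card_bij (fun p _ => s(p.1, p.2))
    · intro p hp; exact (hE p hp).2
    · intro p hp q hq heq
      rcases Sym2.eq_iff.mp heq with ⟨ha, hb⟩ | ⟨ha, hb⟩
      · exact Prod.ext ha hb
      · exfalso
        have h1 := (hE p hp).1
        have h2 := (hE q hq).1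
        rw [← hb] at h2
        exact absurd (lt_trans h1 h2) (by rw [ha]; exact lt_irrefl _)
    · intro z hz
      induction z using Sym2.inductionOn with
      | hf u v =>
        have hadj : (permGraph π).Adj u v := hM.1 hz
        rcases hadj with ⟨h1, _⟩ | ⟨h1, _⟩
        · refine ⟨(u, v), ?_, rfl⟩
          simp only [hEdef, Finset.mem_filter, Finset.mem_univ, true_and]
          exact ⟨h1, hz⟩
        · refine ⟨(v, u), ?_, Sym2.eq_swap⟩
          simp only [hEdef, Finset.mem_filter, Finset.mem_univ, true_and]
          rw [Sym2.eq_swap]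
          exact ⟨h1, hz⟩
  have injfst : Set.InjOn (Prod.fst : Fin n × Fin n → Fin n) (↑E : Set (Fin n × Fin n)) := by
    intro p hp q hq heq
    have hp' := hE p (Finset.mem_coe.mp hp)
    have hq' := hE q (Finset.mem_coe.mp hq)
    by_contra hne
    have hne2 : p.2 ≠ q.2 := by
      intro h2; exact hne (Prod.ext heq h2)
    have hedgene : s(p.1, p.2) ≠ s(q.1, q.2) := by
      intro heq2
      rcases Sym2.eq_iff.mp heq2 with ⟨_, hb⟩ | ⟨ha, hb⟩
      · exact hne2 hb
      · have h1 : q.2 < q.1 := by rw [← ha, ← hb]; exact hp'.1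
        exact absurd (lt_trans h1 hq'.1) (lt_irrefl _)
    have := (hM.2 _ hp'.2 _ hq'.2 hedgene p.1 (Sym2.mem_mk_left _ _) q.1
      (Sym2.mem_mk_left _ _)).1
    exact this heq
  have cardF : (E.image Prod.fst).card = k := by
    rw [Finset.card_image_of_injOn injfst, cardE]
  set F := E.image Prod.fst with hFdef
  have hk1 : 1 ≤ k := hpos
  let o := F.orderIsoOfFin cardF
  have hsel : ∀ i : Fin k, ∃ p, p ∈ E ∧ p.1 = (o i : Fin n) := by
    intro i
    have := (o i).2
    simp only [hFdef, Finset.mem_image] at this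
    obtain ⟨p, hp, hp2⟩ := this
    exact ⟨p, hp, hp2⟩
  choose g hg1 hg2 using hsel
  set c : ℕ → Fin n × Fin n :=
    fun i => if h : i < k then g ⟨i, h⟩ else g ⟨0, hk1⟩ with hcdef
  have hcE : ∀ i (h : i < k), c i = g ⟨i, h⟩ := by
    intro i h; simp [hcdef, dif_pos h]
  have hmatch : ∀ i < k, IsMatch π (c i).1 (c i).2 := by
    intro i hi
    rw [hcE i hi]
    have h1 := hE _ (hg1 ⟨i, hi⟩)
    have hadj : (permGraph π).Adj (g ⟨i, hi⟩).1 (g ⟨i, hi⟩).2 := hM.1 h1.2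
    rcases hadj with ⟨_, h'⟩ | ⟨h'', _⟩
    · exact ⟨h1.1, h'⟩
    · exact absurd h1.1 (not_lt.mpr h''.le)
  have horder : ∀ i, i + 1 < k → MatchLT π (c i) (c (i + 1)) := by
    intro i hi
    have hi' : i < k := by omega
    rw [hcE i hi', hcE (i + 1) hi]
    have h1 := hE _ (hg1 ⟨i, hi'⟩)
    have h2 := hE _ (hg1 ⟨i + 1, hi⟩)
    refine comp_lemma hM h1.2 h1.1 h2.2 h2.1 ?_
    rw [hg2 ⟨i, hi'⟩, hg2 ⟨i + 1, hi⟩]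
    exact_mod_cast o.strictMono (show (⟨i, hi'⟩ : Fin k) < ⟨i + 1, hi⟩ by
      exact Fin.mk_lt_mk.mpr (Nat.lt_succ_self i))
  exact ⟨c 0, hmatch 0 hpos, ⟨hk1, c, rfl, hmatch, horder⟩⟩

/-- If `f(e)` is the maximum length of a chain of matches with smallest element `e`, then
the maximum of `f` over all matches equals the maximum size of an induced matching in
`G(π)`, and `f` satisfies the recurrence `f(e) = 1 + max {f(e') : e < e'}` (with
`max ∅ = 0`). -/
theorem stmt_19 {n : ℕ} (π : Equiv.Perm (Fin n)) (f : Fin n × Fin n → ℕ)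
    (hf : ∀ e : Fin n × Fin n, IsMatch π e.1 e.2 →
      IsGreatest (chainLengthsFrom π e) (f e)) :
    (sSup {m : ℕ | ∃ e : Fin n × Fin n, IsMatch π e.1 e.2 ∧ f e = m} =
      sSup {k : ℕ | ∃ M : Finset (Sym2 (Fin n)),
        IsInducedMatching (permGraph π) ↑M ∧ M.card = k}) ∧
    (∀ e : Fin n × Fin n, IsMatch π e.1 e.2 →
      f e = 1 + sSup {m : ℕ | ∃ e' : Fin n × Fin n,
        IsMatch π e'.1 e'.2 ∧ MatchLT π e e' ∧ f e' = m}) := by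
  classical
  have bddA : BddAbove {m : ℕ | ∃ e : Fin n × Fin n, IsMatch π e.1 e.2 ∧ f e = m} := by
    refine ⟨n, ?_⟩
    rintro a ⟨e, he, rfl⟩
    exact chain_le (hf e he).1
  have bddB : BddAbove {k : ℕ | ∃ M : Finset (Sym2 (Fin n)),
      IsInducedMatching (permGraph π) ↑M ∧ M.card = k} := by
    refine ⟨Fintype.card (Sym2 (Fin n)), ?_⟩
    rintro b ⟨M, hM, rfl⟩
    exact Finset.card_le_univ M
  have hB0 : (0 : ℕ) ∈ {k : ℕ | ∃ M : Finset (Sym2 (Fin n)),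
      IsInducedMatching (permGraph π) ↑M ∧ M.card = k} := by
    refine ⟨∅, ⟨?_, ?_⟩, rfl⟩
    · intro z hz; simp at hz
    · intro z hz; simp at hz
  constructor
  · apply le_antisymm
    · rcases Set.eq_empty_or_nonempty
        {m : ℕ | ∃ e : Fin n × Fin n, IsMatch π e.1 e.2 ∧ f e = m} with hA | hA
      · rw [hA, csSup_empty]
        exact Nat.zero_le _
      · apply csSup_le hA
        rintro a ⟨e, he, rfl⟩
        obtain ⟨M, hM, hcard⟩ := chain_matching (hf e he).1
        exact le_csSup bddB ⟨M, hM, hcard⟩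
    · apply csSup_le ⟨0, hB0⟩
      rintro b ⟨M, hM, rfl⟩
      rcases Nat.eq_zero_or_pos M.card with h0 | hpos
      · rw [h0]; exact Nat.zero_le _
      · obtain ⟨e, he, hchain⟩ := matching_chain hM hpos
        exact le_trans ((hf e he).2 hchain) (le_csSup bddA ⟨e, he, rfl⟩)
  · intro e he
    have bddS : BddAbove {m : ℕ | ∃ e' : Fin n × Fin n,
        IsMatch π e'.1 e'.2 ∧ MatchLT π e e' ∧ f e' = m} := by
      refine ⟨n, ?_⟩
      rintro m ⟨e', he', -, rfl⟩
      exact chain_le (hf e' he').1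
    have hfe1 : 1 ≤ f e := by
      apply (hf e he).2
      refine ⟨le_refl 1, fun _ => e, rfl, ?_, ?_⟩
      · intro i hi
        exact he
      · intro i hi
        omega
    apply le_antisymm
    · obtain ⟨hk1, c, hc0, hc1, hc2⟩ := (hf e he).1
      by_cases hfe2 : f e ≤ 1
      · exact le_trans hfe2 (Nat.le_add_right 1 _)
      · have h2 : 2 ≤ f e := by omega
        have hm1 : IsMatch π (c 1).1 (c 1).2 := hc1 1 (by omega)
        have hchain : f e - 1 ∈ chainLengthsFrom π (c 1) := by
          refine ⟨by omega, fun i => c (i + 1), rfl, ?_, ?_⟩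
          · intro i hi
            exact hc1 (i + 1) (by omega)
          · intro i hi
            exact hc2 (i + 1) (by omega)
        have h3 : f e - 1 ≤ f (c 1) := (hf _ hm1).2 hchain
        have h4 : f (c 1) ∈ {m : ℕ | ∃ e' : Fin n × Fin n,
            IsMatch π e'.1 e'.2 ∧ MatchLT π e e' ∧ f e' = m} := by
          refine ⟨c 1, hm1, ?_, rfl⟩
          rw [← hc0]
          exact hc2 0 (by omega)
        have h5 := le_csSup bddS h4
        omega
    · rcases Set.eq_empty_or_nonempty {m : ℕ | ∃ e' : Fin n × Fin n,
          IsMatch π e'.1 e'.2 ∧ MatchLT π e e' ∧ f e' = m} with hS | hS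
      · rw [hS, csSup_empty]
        simpa using hfe1
      · obtain ⟨e', he', hlt, hfe'⟩ := Nat.sSup_mem hS bddS
        obtain ⟨hk1', c', hc0', hc1', hc2'⟩ := (hf e' he').1
        have hmem : f e' + 1 ∈ chainLengthsFrom π e := by
          refine ⟨by omega, fun i => if i = 0 then e else c' (i - 1), by simp, ?_, ?_⟩
          · intro i hi
            cases i with
            | zero => simpa using he
            | succ j => simpa using hc1' j (by omega)
          · intro i hi
            cases i with
            | zero =>
              simpa [hc0'] using (show MatchLT π e (c' 0) by rw [hc0']; exact hlt)
            | succ j =>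
              simpa using hc2' j (by omega)
        have := (hf e he).2 hmem
        omega
end
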